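/- Let v_1,...,v_n and w_1,...,w_n be vectors in an m-dimensional vector space V over a field K, with n >= m, such that det(v_{i_1},...,v_{i_m}) = det(w_{i_1},...,w_{i_m}) for all 1 <= i_1 < ... < i_m <= n. If at least one of these determinants is nonzero, then there exists phi in SL(V) with w_i = phi(v_i) for all i. -/

import Mathlib

theorem stmt11 {K : Type*} [Field K] {V : Type*} [AddCommGroup V] [Module K V]
    {m n : ℕ} (hmn : m ≤ n) (b : Module.Basis (Fin m) K V)
    (v w : Fin n → V)
    (hdet : ∀ s : Fin m → Fin n, StrictMono s → b.det (v ∘ s) = b.det (w ∘ s))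
    (hnz : ∃ s : Fin m → Fin n, StrictMono s ∧ b.det (v ∘ s) ≠ 0) :
    ∃ φ : V ≃ₗ[K] V, LinearMap.det (φ : V →ₗ[K] V) = 1 ∧ ∀ i, w i = φ (v i) := by
  classical
  obtain ⟨s₀, hs₀, hd⟩ := hnz
  -- Extend the hypothesis to arbitrary index maps.
  have key : ∀ s : Fin m → Fin n, b.det (v ∘ s) = b.det (w ∘ s) := by
    intro s
    by_cases hinj : Function.Injective s
    · set σ := Tuple.sort s with hσ
      have hmono : StrictMono (s ∘ σ) :=
        (Tuple.monotone_sort s).strictMono_of_injective (hinj.comp σ.injective)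
      have h1 := hdet _ hmono
      have h2 : b.det ((v ∘ s) ∘ σ) = Equiv.Perm.sign σ • b.det (v ∘ s) :=
        b.det.map_perm _ _
      have h3 : b.det ((w ∘ s) ∘ σ) = Equiv.Perm.sign σ • b.det (w ∘ s) :=
        b.det.map_perm _ _
      have hvw : v ∘ (s ∘ σ) = (v ∘ s) ∘ σ := rfl
      have hww : w ∘ (s ∘ σ) = (w ∘ s) ∘ σ := rfl
      rw [hvw, hww, h2, h3] at h1
      rcases Int.units_eq_one_or (Equiv.Perm.sign σ) with h | h <;>
        rw [h] at h1 <;> simpa using h1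
    · simp only [Function.Injective, not_forall] at hinj
      obtain ⟨i, j, hij, hne⟩ := hinj
      rw [b.det.map_eq_zero_of_eq (v ∘ s) (by simp [hij]) hne,
        b.det.map_eq_zero_of_eq (w ∘ s) (by simp [hij]) hne]
  have hdw : b.det (w ∘ s₀) ≠ 0 := (key s₀) ▸ hd
  -- Build bases from v ∘ s₀ and w ∘ s₀.
  obtain ⟨hliv, hspv⟩ := (Module.Basis.is_basis_iff_det b).mpr (isUnit_iff_ne_zero.mpr hd)
  obtain ⟨hliw, hspw⟩ := (Module.Basis.is_basis_iff_det b).mpr (isUnit_iff_ne_zero.mpr hdw)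
  set bv := Module.Basis.mk hliv hspv.ge with hbv
  set bw := Module.Basis.mk hliw hspw.ge with hbw
  have hbvc : ⇑bv = v ∘ s₀ := Module.Basis.coe_mk _ _
  have hbwc : ⇑bw = w ∘ s₀ := Module.Basis.coe_mk _ _
  set φ := bv.equiv bw (Equiv.refl _) with hφ
  have hφv : ∀ k, φ (v (s₀ k)) = w (s₀ k) := by
    intro k
    have := bv.equiv_apply (e := Equiv.refl _) (b' := bw) (i := k)
    rwa [hbvc, hbwc] at this
    -- might need simp
  have hcomp : (φ : V →ₗ[K] V) ∘ (v ∘ s₀) = w ∘ s₀ := funext fun k => hφv k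
  have hdet1 : LinearMap.det (φ : V →ₗ[K] V) = 1 := by
    have := b.det_comp (φ : V →ₗ[K] V) (v ∘ s₀)
    rw [hcomp, ← key s₀] at this
    field_simp at this
    exact this.symm
  refine ⟨φ, hdet1, fun i => ?_⟩
  -- coordinates of φ (v i) in bw equal coordinates of v i in bv
  have hreprφ : ∀ j, bw.repr (φ (v i)) j = bv.repr (v i) j := by
    intro j
    have : (bw.coord j).comp (φ : V →ₗ[K] V) = bv.coord j := by
      apply bv.ext
      intro k
      simp [hφ, Module.Basis.equiv_apply]
    simpa [Module.Basis.coord_apply] using LinearMap.congr_fun this (v i)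
  -- Cramer identities
  have cram := fun j => b.det_smul_mk_coord_eq_det_update hliv hspv.ge j
  have cramw := fun j => b.det_smul_mk_coord_eq_det_update hliw hspw.ge j
  have hrepr : ∀ j, bw.repr (w i) j = bv.repr (v i) j := by
    intro j
    have h1 := LinearMap.congr_fun (cram j) (v i)
    have h2 := LinearMap.congr_fun (cramw j) (w i)
    simp only [LinearMap.smul_apply, smul_eq_mul, MultilinearMap.toLinearMap_apply] at h1 h2
    have hu := key (Function.update s₀ j i)
    rw [Function.comp_update, Function.comp_update] at hu
    have : b.det (v ∘ s₀) * bv.coord j (v i) = b.det (w ∘ s₀) * bw.coord j (w i) := by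
      rw [h1, h2]; exact hu
    rw [← key s₀] at this
    have := mul_left_cancel₀ hd this
    simpa [Module.Basis.coord_apply] using this.symm
  apply bw.ext_elem_iff.mpr
  intro j
  rw [hrepr j, hreprφ j]
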